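/- In the canonical triangulation of the support of a skeleton of an r-uniform linear k-cycle (a maximal planar triangulation on the 2k support vertices v_1, u_1, v_2, u_2, ..., v_k, u_k with triangles as in the paper's Figure 1), the following holds: for any proper subset U of the support that induces at least one triangle of the canonical triangulation, there exists a vertex x of the support with x ∉ U and vertices x', y, z ∈ U such that both {x, y, z} and {x', y, z} are triangles of the canonical triangulation. -/
import Mathlib


open Finset

/-- The vertices of the support of a skeleton of `C^r_k`: the core vertices `v_i = inl i`
and the chosen non-core vertices `u_i = inr i`, indices in `ZMod k` (paper indices mod `k`,
so `v_{k-i+1}` corresponds to `inl (1 - i)`). -/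
abbrev SupportVertex (k : ℕ) := ZMod k ⊕ ZMod k

/-- The triangles of the canonical triangulation of the support: the outer triangles
`{v_i, u_i, v_{i+1}}` together with the internal zig-zag triangles
`{v_i, v_{k-i+1}, v_{k-i+2}}` and `{v_i, v_{i+1}, v_{k-i+1}}` of the core cycle
(degenerate triples are excluded). -/
def canonicalTriangles (k : ℕ) : Set (Finset (SupportVertex k)) :=
  {T | T.card = 3 ∧
    ((∃ i : ZMod k, T = {Sum.inl i, Sum.inr i, Sum.inl (i + 1)}) ∨
     (∃ i : ZMod k, T = {Sum.inl i, Sum.inl (1 - i), Sum.inl (2 - i)}) ∨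
     (∃ i : ZMod k, T = {Sum.inl i, Sum.inl (i + 1), Sum.inl (1 - i)}))}

namespace CanTriAux


variable {k : ℕ}

/-- The internal (core) triangle `B_i = {v_i, v_{i+1}, v_{1-i}}`. -/
def Bt (k : ℕ) (i : ZMod k) : Finset (SupportVertex k) :=
  {Sum.inl i, Sum.inl (i + 1), Sum.inl (1 - i)}

/-- The enumeration of internal triangles along the zig-zag dual path. -/
def pa (k : ℕ) (n : ℕ) : ZMod k :=
  if Even n then ((n / 2 + 1 : ℕ) : ZMod k) else -((n / 2 + 1 : ℕ) : ZMod k)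

lemma pa_even {n : ℕ} (h : Even n) : pa k n = ((n / 2 + 1 : ℕ) : ZMod k) := if_pos h
lemma pa_odd {n : ℕ} (h : ¬ Even n) : pa k n = -((n / 2 + 1 : ℕ) : ZMod k) := if_neg h

lemma castne (hk : 3 ≤ k) {a b : ℕ} (ha : a < k) (hb : b < k) (h : a ≠ b) :
    (a : ZMod k) ≠ (b : ZMod k) := by
  intro he
  have : ((a : ZMod k)).val = ((b : ZMod k)).val := by rw [he]
  rw [ZMod.val_natCast_of_lt ha, ZMod.val_natCast_of_lt hb] at this
  exact h this

lemma one_ne (hk : 3 ≤ k) : (1 : ZMod k) ≠ 0 := by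
  simpa using castne hk (show 1 < k by omega) (show 0 < k by omega) (by omega)

lemma two_ne_zero' (hk : 3 ≤ k) : (2 : ZMod k) ≠ 0 := by
  simpa using castne hk (show 2 < k by omega) (show 0 < k by omega) (by omega)

lemma two_ne_one (hk : 3 ≤ k) : (2 : ZMod k) ≠ 1 := by
  simpa using castne hk (show 2 < k by omega) (show 1 < k by omega) (by omega)

lemma self_ne_succ (hk : 3 ≤ k) (j : ZMod k) : j ≠ j + 1 := by
  intro h; exact one_ne hk (by linear_combination -h)

lemma card3_ne {α : Type*} [DecidableEq α] {a b c : α}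
    (h : ({a, b, c} : Finset α).card = 3) : a ≠ b ∧ a ≠ c ∧ b ≠ c := by
  refine ⟨?_, ?_, ?_⟩ <;> rintro rfl
  · have hs : ({a, a, c} : Finset α) ⊆ {a, c} := by intro x hx; simp at hx ⊢; tauto
    have := Finset.card_le_card hs
    have h2 : ({a, c} : Finset α).card ≤ 2 :=
      (Finset.card_insert_le _ _).trans (by simp)
    omega
  · have hs : ({a, b, a} : Finset α) ⊆ {a, b} := by intro x hx; simp at hx ⊢; tauto
    have := Finset.card_le_card hs
    have h2 : ({a, b} : Finset α).card ≤ 2 :=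
      (Finset.card_insert_le _ _).trans (by simp)
    omega
  · have hs : ({a, b, b} : Finset α) ⊆ {a, b} := by intro x hx; simp at hx ⊢; tauto
    have := Finset.card_le_card hs
    have h2 : ({a, b} : Finset α).card ≤ 2 :=
      (Finset.card_insert_le _ _).trans (by simp)
    omega

lemma card3 {α : Type*} [DecidableEq α] {a b c : α}
    (h1 : a ≠ b) (h2 : a ≠ c) (h3 : b ≠ c) : ({a, b, c} : Finset α).card = 3 := by
  rw [Finset.card_insert_of_notMem (by simp [h1, h2]),
    Finset.card_insert_of_notMem (by simp [h3]), Finset.card_singleton]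

lemma memO (hk : 3 ≤ k) (j : ZMod k) :
    ({Sum.inl j, Sum.inr j, Sum.inl (j + 1)} : Finset (SupportVertex k)) ∈
      canonicalTriangles k := by
  refine ⟨card3 (by simp) ?_ (by simp), Or.inl ⟨j, rfl⟩⟩
  simp only [ne_eq, Sum.inl.injEq]
  exact self_ne_succ hk j

lemma memB (hk : 3 ≤ k) {i : ZMod k} (h0 : 2 * i ≠ 0) (h1 : 2 * i ≠ 1) :
    Bt k i ∈ canonicalTriangles k := by
  refine ⟨card3 ?_ ?_ ?_, Or.inr (Or.inr ⟨i, rfl⟩)⟩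
  · simp only [ne_eq, Sum.inl.injEq]; exact self_ne_succ hk i
  · simp only [ne_eq, Sum.inl.injEq]
    intro h; exact h1 (by linear_combination h)
  · simp only [ne_eq, Sum.inl.injEq]
    intro h; exact h0 (by linear_combination h)

/-- If no "extension witness" exists for `U`, then containment in `U` propagates
from a triangle to any triangle sharing two vertices with it. -/
lemma step (hk : 3 ≤ k) {U : Finset (SupportVertex k)}
    (hng : ¬ ∃ x : SupportVertex k, x ∉ U ∧
      ∃ x' y z : SupportVertex k, x' ∈ U ∧ y ∈ U ∧ z ∈ U ∧
        ({x, y, z} : Finset (SupportVertex k)) ∈ canonicalTriangles k ∧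
        ({x', y, z} : Finset (SupportVertex k)) ∈ canonicalTriangles k)
    {T T' : Finset (SupportVertex k)}
    (hT : T ∈ canonicalTriangles k) (hT' : T' ∈ canonicalTriangles k)
    (hTU : T ⊆ U) {y z : SupportVertex k} (hyz : y ≠ z)
    (hyT : y ∈ T) (hzT : z ∈ T) (hyT' : y ∈ T') (hzT' : z ∈ T') : T' ⊆ U := by
  have hc : T.card = 3 := hT.1
  have hc' : T'.card = 3 := hT'.1
  have hpair2 : ({y, z} : Finset (SupportVertex k)).card = 2 := by
    rw [Finset.card_insert_of_notMem (by simp [hyz]), Finset.card_singleton]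
  -- third vertex of T'
  have hsub' : ({y, z} : Finset (SupportVertex k)) ⊆ T' := by
    intro w hw; simp at hw; rcases hw with rfl | rfl <;> assumption
  have hone' : (T' \ {y, z}).card = 1 := by
    rw [Finset.card_sdiff_of_subset hsub', hc', hpair2]
  obtain ⟨x, hx⟩ := Finset.card_eq_one.mp hone'
  have hxm := hx ▸ Finset.mem_singleton_self x
  have hxT' : x ∈ T' := (Finset.mem_sdiff.mp hxm).1
  have hxyz : x ∉ ({y, z} : Finset (SupportVertex k)) := (Finset.mem_sdiff.mp hxm).2
  have hT'eq : T' = {x, y, z} := by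
    refine (Finset.eq_of_subset_of_card_le ?_ ?_).symm
    · exact Finset.insert_subset hxT' (Finset.insert_subset hyT'
        (Finset.singleton_subset_iff.2 hzT'))
    · have : ({x, y, z} : Finset (SupportVertex k)).card = 3 := by
        rw [Finset.card_insert_of_notMem hxyz, hpair2]
      omega
  -- third vertex of T
  have hsub : ({y, z} : Finset (SupportVertex k)) ⊆ T := by
    intro w hw; simp at hw; rcases hw with rfl | rfl <;> assumption
  have honeT : (T \ {y, z}).card = 1 := by
    rw [Finset.card_sdiff_of_subset hsub, hc, hpair2]
  obtain ⟨x', hx'⟩ := Finset.card_eq_one.mp honeT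
  have hx'm := hx' ▸ Finset.mem_singleton_self x'
  have hx'T : x' ∈ T := (Finset.mem_sdiff.mp hx'm).1
  have hx'yz : x' ∉ ({y, z} : Finset (SupportVertex k)) := (Finset.mem_sdiff.mp hx'm).2
  have hTeq : T = {x', y, z} := by
    refine (Finset.eq_of_subset_of_card_le ?_ ?_).symm
    · exact Finset.insert_subset hx'T (Finset.insert_subset hyT
        (Finset.singleton_subset_iff.2 hzT))
    · have : ({x', y, z} : Finset (SupportVertex k)).card = 3 := by
        rw [Finset.card_insert_of_notMem hx'yz, hpair2]
      omega
  by_cases hxU : x ∈ U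
  · rw [hT'eq]
    exact Finset.insert_subset hxU (Finset.insert_subset (hTU hyT)
      (Finset.singleton_subset_iff.2 (hTU hzT)))
  · exact absurd ⟨x, hxU, x', y, z, hTU hx'T, hTU hyT, hTU hzT,
      hT'eq ▸ hT', hTeq ▸ hT⟩ hng

lemma neg_one_cast (hk : 3 ≤ k) : ((k - 1 : ℕ) : ZMod k) = -1 := by
  have h1 : (1 : ℕ) ≤ k := by omega
  rw [Nat.cast_sub h1, ZMod.natCast_self, Nat.cast_one]; ring

/-- Non-degeneracy of internal triangles along the path. -/
lemma nd0 (hk : 3 ≤ k) {n : ℕ} (hn : n ≤ k - 3) :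
    2 * pa k n ≠ 0 ∧ 2 * pa k n ≠ 1 := by
  by_cases h : Even n
  · rw [pa_even h]
    have hnn : 2 * (n / 2 + 1) = n + 2 := by
      rcases h with ⟨m, rfl⟩; omega
    have h2 : 2 * ((n / 2 + 1 : ℕ) : ZMod k) = ((n + 2 : ℕ) : ZMod k) := by
      rw [← hnn]; push_cast; ring
    rw [h2]
    constructor
    · simpa using castne hk (show n + 2 < k by omega) (show 0 < k by omega) (by omega)
    · simpa using castne hk (show n + 2 < k by omega) (show 1 < k by omega) (by omega)
  · rw [pa_odd h]
    have hodd : n % 2 = 1 := Nat.not_even_iff.mp h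
    have hnn : 2 * (n / 2 + 1) = n + 1 := by omega
    have h2 : 2 * -((n / 2 + 1 : ℕ) : ZMod k) = -((n + 1 : ℕ) : ZMod k) := by
      rw [← hnn]; push_cast; ring
    rw [h2]
    constructor
    · rw [neg_ne_zero]
      simpa using castne hk (show n + 1 < k by omega) (show 0 < k by omega) (by omega)
    · intro hcon
      have : ((n + 1 : ℕ) : ZMod k) = ((k - 1 : ℕ) : ZMod k) := by
        rw [neg_one_cast hk]; linear_combination -hcon
      exact castne hk (show n + 1 < k by omega) (show k - 1 < k by omega)
        (by omega) this

/-- Consecutive internal triangles on the path share two vertices. -/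
lemma adj (hk : 3 ≤ k) {n : ℕ} (hn : n + 1 ≤ k - 3) :
    ∃ y z : SupportVertex k, y ≠ z ∧
      y ∈ Bt k (pa k n) ∧ z ∈ Bt k (pa k n) ∧
      y ∈ Bt k (pa k (n + 1)) ∧ z ∈ Bt k (pa k (n + 1)) := by
  by_cases h : Even n
  · -- pa n = c, pa (n+1) = -c  with c = n/2+1
    set c : ZMod k := ((n / 2 + 1 : ℕ) : ZMod k) with hc
    have e1 : pa k n = c := pa_even h
    have hdiv : (n + 1) / 2 = n / 2 := by rcases h with ⟨m, rfl⟩; omega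
    have e2 : pa k (n + 1) = -c := by
      rw [pa_odd (by simpa [Nat.even_add_one] using h), hdiv]
    have hnd := nd0 hk (show n ≤ k - 3 by omega)
    rw [e1] at hnd
    refine ⟨Sum.inl (c + 1), Sum.inl (1 - c), ?_, ?_, ?_, ?_, ?_⟩
    · simp only [ne_eq, Sum.inl.injEq]
      intro hcon; exact hnd.1 (by linear_combination hcon)
    · rw [e1]; simp [Bt]
    · rw [e1]; simp [Bt]
    · rw [e2]; simp only [Bt, Finset.mem_insert, Finset.mem_singleton, Sum.inl.injEq]
      right; right; ring
    · rw [e2]; simp only [Bt, Finset.mem_insert, Finset.mem_singleton, Sum.inl.injEq]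
      right; left; ring
  · -- pa n = -c, pa (n+1) = c+1 with c = n/2+1
    set c : ZMod k := ((n / 2 + 1 : ℕ) : ZMod k) with hc
    have e1 : pa k n = -c := pa_odd h
    have hodd : n % 2 = 1 := Nat.not_even_iff.mp h
    have hdiv : (n + 1) / 2 + 1 = (n / 2 + 1) + 1 := by omega
    have e2 : pa k (n + 1) = c + 1 := by
      rw [pa_even (Nat.even_add_one.mpr h), hdiv, hc]
      push_cast; ring
    have hnd := nd0 hk (show n + 1 ≤ k - 3 by omega)
    rw [e2] at hnd
    refine ⟨Sum.inl (1 + c), Sum.inl (-c), ?_, ?_, ?_, ?_, ?_⟩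
    · simp only [ne_eq, Sum.inl.injEq]
      intro hcon; exact hnd.2 (by linear_combination hcon)
    · rw [e1]; simp only [Bt, Finset.mem_insert, Finset.mem_singleton, Sum.inl.injEq]
      right; right; ring
    · rw [e1]; simp [Bt]
    · rw [e2]; simp only [Bt, Finset.mem_insert, Finset.mem_singleton, Sum.inl.injEq]
      left; ring
    · rw [e2]; simp only [Bt, Finset.mem_insert, Finset.mem_singleton, Sum.inl.injEq]
      right; right; ring

/-- Every non-degenerate index is hit by the path enumeration. -/
lemma surj (hk : 3 ≤ k) {i : ZMod k} (h0 : 2 * i ≠ 0) (h1 : 2 * i ≠ 1) :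
    ∃ n, n ≤ k - 3 ∧ pa k n = i := by
  haveI : NeZero k := ⟨by omega⟩
  set t := i.val with ht
  have htk : t < k := ZMod.val_lt i
  have hti : ((t : ℕ) : ZMod k) = i := ZMod.natCast_rightInverse i
  have ht0 : t ≠ 0 := by
    rintro h
    apply h0
    have : i = 0 := by rw [← hti, h, Nat.cast_zero]
    rw [this]; ring
  rcases lt_trichotomy (2 * t) k with hlt | heq | hgt
  · refine ⟨2 * (t - 1), by omega, ?_⟩
    rw [pa_even ⟨t - 1, by ring⟩]
    have hd : 2 * (t - 1) / 2 + 1 = t := by omega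
    rw [hd, hti]
  · exfalso
    apply h0
    have : ((2 * t : ℕ) : ZMod k) = 0 := by rw [heq]; exact ZMod.natCast_self k
    push_cast at this
    rw [← hti]; linear_combination this
  · have h2t : 2 * t ≠ k + 1 := by
      intro hco
      apply h1
      have : ((2 * t : ℕ) : ZMod k) = ((k + 1 : ℕ) : ZMod k) := by rw [hco]
      push_cast [ZMod.natCast_self] at this
      rw [← hti]; linear_combination this
    refine ⟨2 * (k - t) - 1, by omega, ?_⟩
    have hodd : ¬ Even (2 * (k - t) - 1) := by
      apply Nat.not_even_iff.mpr; omega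
    rw [pa_odd hodd]
    have hd : (2 * (k - t) - 1) / 2 + 1 = k - t := by omega
    rw [hd]
    have hcast : ((k - t : ℕ) : ZMod k) = -i := by
      rw [Nat.cast_sub (by omega), ZMod.natCast_self, hti]; ring
    rw [hcast]; ring

/-- Every cycle edge `{v_j, v_{j+1}}` lies in some non-degenerate internal triangle. -/
lemma edgeB (hk : 3 ≤ k) (j : ZMod k) :
    ∃ i : ZMod k, 2 * i ≠ 0 ∧ 2 * i ≠ 1 ∧
      Sum.inl j ∈ Bt k i ∧ Sum.inl (j + 1) ∈ Bt k i := by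
  have h2 : (2 : ZMod k) ≠ 0 := by
    simpa using castne hk (show 2 < k by omega) (show 0 < k by omega) (by omega)
  have h21 : (2 : ZMod k) ≠ 1 := by
    simpa using castne hk (show 2 < k by omega) (show 1 < k by omega) (by omega)
  by_cases hj1 : 2 * j = 1
  · refine ⟨j - 1, ?_, ?_, ?_, ?_⟩
    · intro h; exact h21 (by linear_combination hj1 - h)
    · intro h; exact h2 (by linear_combination hj1 - h)
    · simp only [Bt, Finset.mem_insert, Finset.mem_singleton, Sum.inl.injEq]
      right; left; ring
    · simp only [Bt, Finset.mem_insert, Finset.mem_singleton, Sum.inl.injEq]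
      right; right; linear_combination hj1
  by_cases hj0 : 2 * j = 0
  · refine ⟨j + 1, ?_, ?_, ?_, ?_⟩
    · intro h; exact h2 (by linear_combination h - hj0)
    · intro h; exact h21 (by linear_combination h - hj0)
    · simp only [Bt, Finset.mem_insert, Finset.mem_singleton, Sum.inl.injEq]
      right; right; linear_combination hj0
    · simp [Bt]
  · exact ⟨j, hj0, hj1, by simp [Bt], by simp [Bt]⟩

end CanTriAux

open Finset

/-- For any proper subset `U` of the support inducing at least one triangle of the canonical
triangulation, there are a vertex `x ∉ U` and vertices `x', y, z ∈ U` such that `{x, y, z}`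
and `{x', y, z}` are both triangles of the canonical triangulation. -/
theorem canonical_triangulation_extension (k : ℕ) (hk : 3 ≤ k)
    (U : Finset (SupportVertex k))
    (hproper : ∃ w : SupportVertex k, w ∉ U)
    (htri : ∃ T ∈ canonicalTriangles k, T ⊆ U) :
    ∃ x : SupportVertex k, x ∉ U ∧
      ∃ x' y z : SupportVertex k, x' ∈ U ∧ y ∈ U ∧ z ∈ U ∧
        ({x, y, z} : Finset (SupportVertex k)) ∈ canonicalTriangles k ∧
        ({x', y, z} : Finset (SupportVertex k)) ∈ canonicalTriangles k := by
  by_contra hng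
  obtain ⟨T0, hT0c, hT0U⟩ := htri
  have hcard := hT0c.1
  have hform := hT0c.2
  -- Step 1: some non-degenerate internal triangle is contained in U
  have init : ∃ i : ZMod k, 2 * i ≠ 0 ∧ 2 * i ≠ 1 ∧ CanTriAux.Bt k i ⊆ U := by
    rcases hform with ⟨i, hTeq⟩ | ⟨i, hTeq⟩ | ⟨i, hTeq⟩
    · -- outer triangle: move across the cycle edge {v_i, v_{i+1}}
      obtain ⟨i', h0, h1, hm1, hm2⟩ := CanTriAux.edgeB hk i
      refine ⟨i', h0, h1, ?_⟩
      refine CanTriAux.step hk hng hT0c (CanTriAux.memB hk h0 h1) hT0U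
        (y := Sum.inl i) (z := Sum.inl (i + 1)) ?_ ?_ ?_ hm1 hm2
      · simp only [ne_eq, Sum.inl.injEq]
        exact CanTriAux.self_ne_succ hk i
      · rw [hTeq]; simp
      · rw [hTeq]; simp
    · -- the "A-form" internal triangle is B_{1-i}
      have heq : ({Sum.inl i, Sum.inl (1 - i), Sum.inl (2 - i)} :
          Finset (SupportVertex k)) = CanTriAux.Bt k (1 - i) := by
        unfold CanTriAux.Bt
        rw [show (1 - i) + 1 = 2 - i from by ring, show 1 - (1 - i) = i from by ring]
        ext w; simp only [Finset.mem_insert, Finset.mem_singleton]; tauto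
      rw [hTeq] at hcard hT0U
      obtain ⟨d1, d2, d3⟩ := CanTriAux.card3_ne hcard
      refine ⟨1 - i, ?_, ?_, heq ▸ hT0U⟩
      · intro h
        apply d2
        rw [Sum.inl.injEq]
        linear_combination -h
      · intro h
        apply d1
        rw [Sum.inl.injEq]
        linear_combination -h
    · -- already a B-form internal triangle
      rw [hTeq] at hcard hT0U
      obtain ⟨d1, d2, d3⟩ := CanTriAux.card3_ne hcard
      refine ⟨i, ?_, ?_, hT0U⟩
      · intro h
        apply d3
        rw [Sum.inl.injEq]
        linear_combination h
      · intro h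
        apply d2
        rw [Sum.inl.injEq]
        linear_combination h
  obtain ⟨i0, h00, h01, hB0⟩ := init
  obtain ⟨n0, hn0le, hn0eq⟩ := CanTriAux.surj hk h00 h01
  -- Step 2: propagate along the zig-zag dual path
  have fwd : ∀ n, n ≤ k - 3 → n0 ≤ n → CanTriAux.Bt k (CanTriAux.pa k n) ⊆ U := by
    intro n
    induction n with
    | zero =>
      intro _ hge
      have : n0 = 0 := Nat.le_zero.mp hge
      rw [← this, hn0eq]; exact hB0
    | succ n ih =>
      intro hle hge
      rcases Nat.eq_or_lt_of_le hge with he | hlt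
      · rw [← he, hn0eq]; exact hB0
      · have hBn := ih (by omega) (by omega)
        obtain ⟨y, z, hyz, m1, m2, m3, m4⟩ := CanTriAux.adj hk (show n + 1 ≤ k - 3 from hle)
        have hndn := CanTriAux.nd0 hk (show n ≤ k - 3 by omega)
        have hdnd := CanTriAux.nd0 hk (show n + 1 ≤ k - 3 from hle)
        exact CanTriAux.step hk hng (CanTriAux.memB hk hndn.1 hndn.2)
          (CanTriAux.memB hk hdnd.1 hdnd.2) hBn hyz m1 m2 m3 m4
  have bwd : ∀ d n, n + d = n0 → CanTriAux.Bt k (CanTriAux.pa k n) ⊆ U := by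
    intro d
    induction d with
    | zero =>
      intro n h
      have : n = n0 := by omega
      rw [this, hn0eq]; exact hB0
    | succ d ih =>
      intro n h
      have hnext := ih (n + 1) (by omega)
      have hle : n + 1 ≤ k - 3 := by omega
      obtain ⟨y, z, hyz, m1, m2, m3, m4⟩ := CanTriAux.adj hk hle
      have hndn := CanTriAux.nd0 hk (show n ≤ k - 3 by omega)
      have hdnd := CanTriAux.nd0 hk hle
      exact CanTriAux.step hk hng (CanTriAux.memB hk hdnd.1 hdnd.2)
        (CanTriAux.memB hk hndn.1 hndn.2) hnext hyz m3 m4 m1 m2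
  have allB : ∀ i : ZMod k, 2 * i ≠ 0 → 2 * i ≠ 1 → CanTriAux.Bt k i ⊆ U := by
    intro i hi0 hi1
    obtain ⟨n, hn, he⟩ := CanTriAux.surj hk hi0 hi1
    by_cases hcmp : n0 ≤ n
    · exact he ▸ fwd n hn hcmp
    · exact he ▸ bwd (n0 - n) n (by omega)
  -- Step 3: every outer triangle is contained in U, hence U is everything
  have allO : ∀ j : ZMod k,
      ({Sum.inl j, Sum.inr j, Sum.inl (j + 1)} : Finset (SupportVertex k)) ⊆ U := by
    intro j
    obtain ⟨i, hz0, hz1, hm1, hm2⟩ := CanTriAux.edgeB hk j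
    refine CanTriAux.step hk hng (CanTriAux.memB hk hz0 hz1) (CanTriAux.memO hk j)
      (allB i hz0 hz1) (y := Sum.inl j) (z := Sum.inl (j + 1)) ?_ hm1 hm2 ?_ ?_
    · simp only [ne_eq, Sum.inl.injEq]
      exact CanTriAux.self_ne_succ hk j
    · simp
    · simp
  obtain ⟨w, hw⟩ := hproper
  cases w with
  | inl j => exact hw (allO j (by simp))
  | inr j => exact hw (allO j (by simp))
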